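/- Let (Ω, F, P) be a probability space with a filtration (F_i)_{0≤i≤k}, and let (M_i)_{0≤i≤k} be a real-valued martingale with respect to this filtration such that M_0 = 0 almost surely and, for each i, the random variable M_i is Gaussian distributed with mean zero. If Var[M_k] > 0, then for every η > 0, P( max_{0≤i≤k} |M_i| > η ) ≤ 2·exp( −η² / (2·Var[M_k]) ). -/

import Mathlib

open MeasureTheory ProbabilityTheory

open MeasureTheory ProbabilityTheory Real
open scoped ENNReal NNReal

namespace GaussMaxAux

lemma integrable_exp_linear_sq {b : ℝ} (hb : 0 < b) (c : ℝ) :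
    Integrable (fun x : ℝ ↦ Real.exp (c * x - b * x ^ 2)) := by
  have h : (fun x : ℝ ↦ Real.exp (c * x - b * x ^ 2))
      = fun x ↦ Real.exp (c ^ 2 / (4 * b)) * Real.exp (-b * (x - c / (2 * b)) ^ 2) := by
    funext x
    rw [← Real.exp_add]
    congr 1
    field_simp
    ring
  rw [h]
  exact ((integrable_exp_neg_mul_sq hb).comp_sub_right (c / (2 * b))).const_mul _

lemma integral_exp_linear_sq {b : ℝ} (hb : 0 < b) (c : ℝ) :
    ∫ x : ℝ, Real.exp (c * x - b * x ^ 2)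
      = Real.exp (c ^ 2 / (4 * b)) * Real.sqrt (π / b) := by
  have h : (fun x : ℝ ↦ Real.exp (c * x - b * x ^ 2))
      = fun x ↦ Real.exp (c ^ 2 / (4 * b)) * Real.exp (-b * (x - c / (2 * b)) ^ 2) := by
    funext x
    rw [← Real.exp_add]
    congr 1
    field_simp
    ring
  rw [h, integral_const_mul,
    integral_sub_right_eq_self (fun x : ℝ ↦ Real.exp (-b * x ^ 2)) (c / (2 * b)),
    integral_gaussian]

lemma integrable_sq_exp {b : ℝ} (hb : 0 < b) :
    Integrable (fun x : ℝ ↦ x ^ 2 * Real.exp (-b * x ^ 2)) := by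
  have h := integrable_rpow_mul_exp_neg_mul_sq hb (s := 2) (by norm_num)
  have h2 : ∀ x : ℝ, x ^ (2 : ℝ) = x ^ 2 := fun x ↦ by
    rw [show (2:ℝ) = ((2:ℕ):ℝ) by norm_num, Real.rpow_natCast]
  simpa only [h2] using h

lemma integrable_id_exp {b : ℝ} (hb : 0 < b) :
    Integrable (fun x : ℝ ↦ x * Real.exp (-b * x ^ 2)) :=
  integrable_mul_exp_neg_mul_sq hb

lemma integral_id_exp {b : ℝ} (hb : 0 < b) :
    ∫ x : ℝ, x * Real.exp (-b * x ^ 2) = 0 := by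
  have h : ∫ x : ℝ, -(x * Real.exp (-b * x ^ 2)) = ∫ x : ℝ, x * Real.exp (-b * x ^ 2) := by
    rw [← integral_neg_eq_self (fun x : ℝ ↦ x * Real.exp (-b * x ^ 2))]
    congr 1
    funext x
    simp [neg_sq]
  rw [integral_neg] at h
  linarith

lemma integral_sq_exp {b : ℝ} (hb : 0 < b) :
    ∫ x : ℝ, x ^ 2 * Real.exp (-b * x ^ 2) = Real.sqrt (π / b) / (2 * b) := by
  have hu : ∀ x : ℝ, HasDerivAt (fun y : ℝ ↦ y) 1 x := fun x ↦ hasDerivAt_id x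
  have hv : ∀ x : ℝ, HasDerivAt (fun y : ℝ ↦ -Real.exp (-b * y ^ 2) / (2 * b))
      (x * Real.exp (-b * x ^ 2)) x := by
    intro x
    have h1 : HasDerivAt (fun y : ℝ ↦ -b * y ^ 2) (-b * (2 * x)) x := by
      simpa using ((hasDerivAt_pow 2 x).const_mul (-b))
    have h2 := (Real.hasDerivAt_exp (-b * x ^ 2)).comp x h1
    have h3 := (h2.neg).div_const (2 * b)
    refine h3.congr_deriv ?_
    rw [div_eq_iff (by positivity)]
    ring
  have huv' : Integrable ((fun y : ℝ ↦ y) * fun x ↦ x * Real.exp (-b * x ^ 2)) := by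
    have := integrable_sq_exp hb
    apply this.congr
    filter_upwards with x
    simp only [Pi.mul_apply, Pi.neg_apply]
    ring
  have hu'v : Integrable ((fun _ : ℝ ↦ (1:ℝ)) * fun y : ℝ ↦ -Real.exp (-b * y ^ 2) / (2 * b)) := by
    have := ((integrable_exp_neg_mul_sq hb).neg.div_const (2 * b))
    apply this.congr
    filter_upwards with x
    simp only [Pi.mul_apply, Pi.neg_apply]
    ring
  have huv : Integrable ((fun y : ℝ ↦ y) * fun y : ℝ ↦ -Real.exp (-b * y ^ 2) / (2 * b)) := by
    have := ((integrable_id_exp hb).neg.div_const (2 * b))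
    apply this.congr
    filter_upwards with x
    simp only [Pi.mul_apply, Pi.neg_apply]
    ring
  have key := integral_mul_deriv_eq_deriv_mul_of_integrable (fun x _ ↦ hu x) (fun x _ ↦ hv x) huv' hu'v huv
  have h2 : ∫ x : ℝ, x * (x * Real.exp (-b * x ^ 2)) = ∫ x : ℝ, x ^ 2 * Real.exp (-b * x ^ 2) := by
    congr 1; funext x; ring
  rw [h2] at key
  rw [key]
  have h3 : ∫ x : ℝ, (1:ℝ) * (-Real.exp (-b * x ^ 2) / (2 * b))
      = -(Real.sqrt (π / b) / (2 * b)) := by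
    have h4 : (fun x : ℝ ↦ (1:ℝ) * (-Real.exp (-b * x ^ 2) / (2 * b)))
        = fun x : ℝ ↦ (-(2 * b)⁻¹) * Real.exp (-b * x ^ 2) := by
      funext x; ring
    rw [h4, integral_const_mul, integral_gaussian]
    ring
  rw [h3, neg_neg]


lemma integrable_dirac' {f : ℝ → ℝ} (hf : Measurable f) (a : ℝ) :
    Integrable f (Measure.dirac a) := by
  refine ⟨hf.aestronglyMeasurable, ?_⟩
  rw [HasFiniteIntegral, lintegral_dirac' _ (by measurability)]
  exact ENNReal.coe_lt_top

lemma gaussianReal_integral_eq {v : ℝ≥0} (hv : v ≠ 0) (f : ℝ → ℝ) :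
    ∫ x, f x ∂(gaussianReal 0 v) = ∫ x, gaussianPDFReal 0 v x * f x := by
  rw [gaussianReal_of_var_ne_zero _ hv,
    show gaussianPDF 0 v = fun x ↦ ((Real.toNNReal (gaussianPDFReal 0 v x) : ℝ≥0∞)) from rfl,
    integral_withDensity_eq_integral_smul (measurable_gaussianPDFReal 0 v).real_toNNReal f]
  congr 1
  funext x
  rw [NNReal.smul_def, smul_eq_mul, Real.coe_toNNReal _ (gaussianPDFReal_nonneg 0 v x)]

lemma gaussianReal_integrable_iff {v : ℝ≥0} (hv : v ≠ 0) {f : ℝ → ℝ} :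
    Integrable f (gaussianReal 0 v)
      ↔ Integrable (fun x ↦ f x * gaussianPDFReal 0 v x) (volume : Measure ℝ) := by
  rw [gaussianReal_of_var_ne_zero _ hv, gaussianPDF_def,
    integrable_withDensity_iff (measurable_gaussianPDFReal 0 v).ennreal_ofReal
      (Filter.Eventually.of_forall fun x ↦ ENNReal.ofReal_lt_top)]
  apply integrable_congr
  filter_upwards with x
  rw [ENNReal.toReal_ofReal (gaussianPDFReal_nonneg 0 v x)]

lemma pdf_mul_eq {v : ℝ≥0} (hv : v ≠ 0) (t x : ℝ) :
    gaussianPDFReal 0 v x * Real.exp (t * x)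
      = (Real.sqrt (2 * π * v))⁻¹ * Real.exp (t * x - (2 * (v:ℝ))⁻¹ * x ^ 2) := by
  have hvpos : (0:ℝ) < v := NNReal.coe_pos.mpr (pos_iff_ne_zero.mpr hv)
  rw [gaussianPDFReal]
  rw [mul_assoc, ← Real.exp_add]
  congr 2
  have : (v:ℝ) ≠ 0 := by exact_mod_cast hv
  field_simp
  ring

lemma gauss_exp_integrable (v : ℝ≥0) (t : ℝ) :
    Integrable (fun x ↦ Real.exp (t * x)) (gaussianReal 0 v) := by
  by_cases hv : v = 0
  · rw [hv, gaussianReal_zero_var]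
    exact integrable_dirac' ((measurable_const.mul measurable_id).exp) 0
  · rw [gaussianReal_integrable_iff hv]
    have hvpos : (0:ℝ) < v := NNReal.coe_pos.mpr (pos_iff_ne_zero.mpr hv)
    have hb : (0:ℝ) < (2 * (v:ℝ))⁻¹ := by positivity
    have h : (fun x ↦ Real.exp (t * x) * gaussianPDFReal 0 v x)
        = fun x ↦ (Real.sqrt (2 * π * v))⁻¹ * Real.exp (t * x - (2 * (v:ℝ))⁻¹ * x ^ 2) := by
      funext x
      rw [mul_comm, pdf_mul_eq hv]
    rw [h]
    exact (integrable_exp_linear_sq hb t).const_mul _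


lemma gauss_exp_integral {v : ℝ≥0} (hv : v ≠ 0) (t : ℝ) :
    ∫ x, Real.exp (t * x) ∂(gaussianReal 0 v) = Real.exp ((v:ℝ) * t ^ 2 / 2) := by
  have hvpos : (0:ℝ) < v := NNReal.coe_pos.mpr (pos_iff_ne_zero.mpr hv)
  have hb : (0:ℝ) < (2 * (v:ℝ))⁻¹ := by positivity
  rw [gaussianReal_integral_eq hv]
  have h : (fun x ↦ gaussianPDFReal 0 v x * Real.exp (t * x))
      = fun x ↦ (Real.sqrt (2 * π * v))⁻¹ * Real.exp (t * x - (2 * (v:ℝ))⁻¹ * x ^ 2) := by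
    funext x; rw [pdf_mul_eq hv]
  rw [h, integral_const_mul, integral_exp_linear_sq hb t]
  have h1 : t ^ 2 / (4 * (2 * (v:ℝ))⁻¹) = (v:ℝ) * t ^ 2 / 2 := by
    field_simp; ring
  have h2 : π / (2 * (v:ℝ))⁻¹ = 2 * π * (v:ℝ) := by
    field_simp
  rw [h1, h2, ← mul_assoc, mul_comm _ (Real.exp _), mul_assoc,
    inv_mul_cancel₀ (by positivity : Real.sqrt (2 * π * (v:ℝ)) ≠ 0), mul_one]

lemma gauss_mean (v : ℝ≥0) : ∫ x, x ∂(gaussianReal 0 v) = 0 := by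
  by_cases hv : v = 0
  · rw [hv, gaussianReal_zero_var]
    simp [integral_dirac]
  · have hvpos : (0:ℝ) < v := NNReal.coe_pos.mpr (pos_iff_ne_zero.mpr hv)
    have hb : (0:ℝ) < (2 * (v:ℝ))⁻¹ := by positivity
    rw [gaussianReal_integral_eq hv]
    have h : (fun x ↦ gaussianPDFReal 0 v x * x)
        = fun x ↦ (Real.sqrt (2 * π * v))⁻¹ * (x * Real.exp (-(2 * (v:ℝ))⁻¹ * x ^ 2)) := by
      funext x
      rw [gaussianPDFReal]
      have : -(x - 0) ^ 2 / (2 * (v:ℝ)) = -(2 * (v:ℝ))⁻¹ * x ^ 2 := by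
        field_simp
        ring
      rw [this]; ring
    rw [h, integral_const_mul, integral_id_exp hb, mul_zero]

lemma gauss_sq_integrable (v : ℝ≥0) :
    Integrable (fun x ↦ x ^ 2) (gaussianReal 0 v) := by
  by_cases hv : v = 0
  · rw [hv, gaussianReal_zero_var]
    exact integrable_dirac' (by measurability) 0
  · have hvpos : (0:ℝ) < v := NNReal.coe_pos.mpr (pos_iff_ne_zero.mpr hv)
    have hb : (0:ℝ) < (2 * (v:ℝ))⁻¹ := by positivity
    rw [gaussianReal_integrable_iff hv]
    have h : (fun x : ℝ ↦ x ^ 2 * gaussianPDFReal 0 v x)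
        = fun x ↦ (Real.sqrt (2 * π * v))⁻¹ * (x ^ 2 * Real.exp (-(2 * (v:ℝ))⁻¹ * x ^ 2)) := by
      funext x
      rw [gaussianPDFReal]
      have : -(x - 0) ^ 2 / (2 * (v:ℝ)) = -(2 * (v:ℝ))⁻¹ * x ^ 2 := by
        field_simp
        ring
      rw [this]; ring
    rw [h]
    exact (integrable_sq_exp hb).const_mul _

lemma gauss_sq_integral {v : ℝ≥0} (hv : v ≠ 0) :
    ∫ x, x ^ 2 ∂(gaussianReal 0 v) = (v:ℝ) := by
  have hvpos : (0:ℝ) < v := NNReal.coe_pos.mpr (pos_iff_ne_zero.mpr hv)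
  have hb : (0:ℝ) < (2 * (v:ℝ))⁻¹ := by positivity
  rw [gaussianReal_integral_eq hv]
  have h : (fun x ↦ gaussianPDFReal 0 v x * x ^ 2)
      = fun x ↦ (Real.sqrt (2 * π * v))⁻¹ * (x ^ 2 * Real.exp (-(2 * (v:ℝ))⁻¹ * x ^ 2)) := by
    funext x
    rw [gaussianPDFReal]
    have : -(x - 0) ^ 2 / (2 * (v:ℝ)) = -(2 * (v:ℝ))⁻¹ * x ^ 2 := by
      field_simp
      ring
    rw [this]; ring
  rw [h, integral_const_mul, integral_sq_exp hb]
  have h2 : π / (2 * (v:ℝ))⁻¹ = 2 * π * (v:ℝ) := by field_simp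
  rw [h2]
  rw [div_eq_mul_inv, ← mul_assoc, mul_comm ((Real.sqrt _)⁻¹) (Real.sqrt _),
    mul_inv_cancel₀ (by positivity : Real.sqrt (2 * π * (v:ℝ)) ≠ 0), one_mul]
  field_simp


variable {Ω : Type*} {m0 : MeasurableSpace Ω} {P : Measure Ω} [IsProbabilityMeasure P]
  {ℱ : Filtration ℕ m0} {M : ℕ → Ω → ℝ}

section Core

variable (hmart : Martingale M ℱ P) {k : ℕ}
  (hgauss : ∀ i ≤ k, ∃ v : NNReal, P.map (M i) = gaussianReal 0 v)

include hmart

lemma haem (i : ℕ) : AEMeasurable (M i) P :=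
  ((hmart.stronglyAdapted i).mono (ℱ.le i)).measurable.aemeasurable

include hgauss

lemma hexpint {i : ℕ} (hi : i ≤ k) (t : ℝ) :
    Integrable (fun ω ↦ Real.exp (t * M i ω)) P := by
  obtain ⟨v, hv⟩ := hgauss i hi
  have h : Integrable (fun x ↦ Real.exp (t * x)) (P.map (M i)) := by
    rw [hv]; exact gauss_exp_integrable v t
  have hg : AEStronglyMeasurable (fun x : ℝ ↦ Real.exp (t * x)) (P.map (M i)) :=
    ((measurable_id.const_mul t).exp).aestronglyMeasurable
  rw [integrable_map_measure hg (haem hmart i)] at h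
  exact h

lemma hL2 {i : ℕ} (hi : i ≤ k) : MemLp (M i) 2 P := by
  obtain ⟨v, hv⟩ := hgauss i hi
  rw [memLp_two_iff_integrable_sq ((haem hmart i).aestronglyMeasurable)]
  have h : Integrable (fun x : ℝ ↦ x ^ 2) (P.map (M i)) := by
    rw [hv]; exact gauss_sq_integrable v
  have hg : AEStronglyMeasurable (fun x : ℝ ↦ x ^ 2) (P.map (M i)) :=
    (measurable_id.pow_const 2).aestronglyMeasurable
  rw [integrable_map_measure hg (haem hmart i)] at h
  exact h

lemma hexpL2 {i : ℕ} (hi : i ≤ k) (t : ℝ) :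
    MemLp (fun ω ↦ Real.exp (t * M i ω)) 2 P := by
  have hMi : Measurable (M i) := ((hmart.stronglyAdapted i).mono (ℱ.le i)).measurable
  rw [memLp_two_iff_integrable_sq ((hMi.const_mul t).exp).aestronglyMeasurable]
  have h := hexpint hmart hgauss hi (2 * t)
  apply h.congr
  filter_upwards with ω
  rw [pow_two, ← Real.exp_add]
  congr 1
  ring

lemma jensen_step {i m : ℕ} (him : i ≤ m) (hmk : m ≤ k) (c : ℝ) :
    (fun ω ↦ Real.exp (c * M i ω)) ≤ᵐ[P] P[fun ω ↦ Real.exp (c * M m ω)|ℱ i] := by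
  have hik : i ≤ k := le_trans him hmk
  set h : Ω → ℝ := fun ω ↦ Real.exp (c * M i ω) with hh
  set G : Ω → ℝ := fun ω ↦ M m ω - M i ω with hGdef
  have hsm_h : StronglyMeasurable[ℱ i] h :=
    Real.continuous_exp.comp_stronglyMeasurable ((hmart.stronglyAdapted i).const_mul c)
  have hGint : Integrable G P := by
    have := ((hL2 hmart hgauss hmk).sub (hL2 hmart hgauss hik)).integrable one_le_two
    exact this
  have hprod : Integrable (fun ω ↦ h ω * G ω) P := by
    have hmem : MemLp ((fun ω ↦ h ω) • (fun ω ↦ G ω)) 1 P :=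
      MemLp.smul ((hL2 hmart hgauss hmk).sub (hL2 hmart hgauss hik))
        (hexpL2 hmart hgauss hik c)
    rw [← memLp_one_iff_integrable]
    exact hmem
  have hint_h : Integrable h P := hexpint hmart hgauss hik c
  have hint2 : Integrable (fun ω ↦ c * (h ω * G ω)) P := hprod.const_mul c
  have hintm : Integrable (fun ω ↦ Real.exp (c * M m ω)) P := hexpint hmart hgauss hmk c
  have key : (h + fun ω ↦ c * (h ω * G ω)) ≤ᵐ[P] fun ω ↦ Real.exp (c * M m ω) := by
    filter_upwards with ω
    simp only [Pi.add_apply, hh, hGdef]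
    have h1 := Real.add_one_le_exp (c * M m ω - c * M i ω)
    have h2 := mul_le_mul_of_nonneg_left h1 (Real.exp_pos (c * M i ω)).le
    rw [← Real.exp_add] at h2
    calc Real.exp (c * M i ω) + c * (Real.exp (c * M i ω) * (M m ω - M i ω))
        = Real.exp (c * M i ω) * (c * M m ω - c * M i ω + 1) := by ring
      _ ≤ Real.exp (c * M i ω + (c * M m ω - c * M i ω)) := h2
      _ = Real.exp (c * M m ω) := by congr 1; ring
  have hcond := condExp_mono (m := ℱ i) (hint_h.add hint2) hintm key
  have e1 : P[h + fun ω ↦ c * (h ω * G ω)|ℱ i]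
      =ᵐ[P] P[h|ℱ i] + P[fun ω ↦ c * (h ω * G ω)|ℱ i] := condExp_add hint_h hint2 _
  have e2 : P[h|ℱ i] = h := condExp_of_stronglyMeasurable (ℱ.le i) hsm_h hint_h
  have e3 : P[fun ω ↦ c * (h ω * G ω)|ℱ i] =ᵐ[P] c • P[fun ω ↦ h ω * G ω|ℱ i] :=
    condExp_smul (m := ℱ i) (μ := P) c (fun ω ↦ h ω * G ω)
  have e4 : P[fun ω ↦ h ω * G ω|ℱ i] =ᵐ[P] fun ω ↦ h ω * (P[G|ℱ i]) ω := by
    have h4 := condExp_mul_of_stronglyMeasurable_left (g := G) hsm_h (by exact hprod) hGint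
    exact h4
  have e5 : P[G|ℱ i] =ᵐ[P] 0 := by
    have ha : P[G|ℱ i] =ᵐ[P] P[M m|ℱ i] - P[M i|ℱ i] := by
      exact condExp_sub ((hL2 hmart hgauss hmk).integrable one_le_two)
        ((hL2 hmart hgauss hik).integrable one_le_two) _
    have hb := hmart.condExp_ae_eq him
    have hc := hmart.condExp_ae_eq (le_refl i)
    filter_upwards [ha, hb, hc] with ω h1 h2 h3
    simp only [Pi.zero_apply]
    rw [h1, Pi.sub_apply, h2, h3, sub_self]
  filter_upwards [hcond, e1, e3, e4, e5] with ω k1 k2 k3 k4 k5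
  refine le_trans (le_of_eq ?_) k1
  rw [k2, Pi.add_apply, e2, k3, Pi.smul_apply, k4, k5]
  simp

lemma exp_submartingale (c : ℝ) :
    Submartingale (fun i ω ↦ Real.exp (c * M (min i k) ω)) ℱ P := by
  refine ⟨fun i ↦ ?_, fun i j hij ↦ ?_, fun i ↦ hexpint hmart hgauss (min_le_right i k) c⟩
  · exact Real.continuous_exp.comp_stronglyMeasurable
      (((hmart.stronglyAdapted (min i k)).mono (ℱ.mono (min_le_left i k))).const_mul c)
  · show (fun ω ↦ Real.exp (c * M (min i k) ω))
        ≤ᵐ[P] P[fun ω ↦ Real.exp (c * M (min j k) ω)|ℱ i]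
    by_cases hik : i ≤ k
    · have hmin : min i k = i := min_eq_left hik
      have him : i ≤ min j k := le_min hij hik
      have h := jensen_step hmart hgauss him (min_le_right j k) c
      rw [hmin]
      exact h
    · push_neg at hik
      have h1 : min i k = k := min_eq_right hik.le
      have h2 : min j k = k := min_eq_right (le_trans hik.le hij)
      rw [h1, h2, condExp_of_stronglyMeasurable (ℱ.le i)
        (Real.continuous_exp.comp_stronglyMeasurable
          (((hmart.stronglyAdapted k).mono (ℱ.mono hik.le)).const_mul c))
        (hexpint hmart hgauss le_rfl c)]

end Core

end GaussMaxAux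

open GaussMaxAux

/-- Gaussian-martingale maximal inequality: if `(M i)_{0 ≤ i ≤ k}` is a real martingale with
`M 0 = 0` a.s. whose marginals are centered Gaussian, and `Var[M k] > 0`, then for every
`η > 0`, `P(max_{0 ≤ i ≤ k} |M i| > η) ≤ 2 exp (-η² / (2 Var[M k]))`. -/
theorem gaussian_martingale_maximal
    {Ω : Type*} {m0 : MeasurableSpace Ω} {P : Measure Ω} [IsProbabilityMeasure P]
    (ℱ : Filtration ℕ m0) (M : ℕ → Ω → ℝ) (k : ℕ)
    (hmart : Martingale M ℱ P)
    (h0 : M 0 =ᵐ[P] 0)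
    (hgauss : ∀ i ≤ k, ∃ v : NNReal, P.map (M i) = gaussianReal 0 v)
    (hvar : 0 < variance (M k) P)
    (η : ℝ) (hη : 0 < η) :
    P {ω | ∃ i ≤ k, η < |M i ω|} ≤
      ENNReal.ofReal (2 * Real.exp (-η ^ 2 / (2 * variance (M k) P))) := by
  classical
  obtain ⟨v, hvmap⟩ := hgauss k le_rfl
  have haemk : AEMeasurable (M k) P := haem hmart k
  have hMk2 : MemLp (M k) 2 P := hL2 hmart hgauss le_rfl
  have hmean : ∫ ω, M k ω ∂P = 0 := by
    have h1 : ∫ x, x ∂(P.map (M k)) = ∫ ω, M k ω ∂P :=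
      integral_map haemk aestronglyMeasurable_id
    rw [← h1, hvmap, gauss_mean]
  have hsqeq : ∫ ω, (M k ω) ^ 2 ∂P = ∫ x, x ^ 2 ∂(P.map (M k)) :=
    (integral_map haemk ((measurable_id.pow_const 2).aestronglyMeasurable)).symm
  have hvne : v ≠ 0 := by
    intro h0'
    rw [h0'] at hvmap
    have hz : variance (M k) P = 0 := by
      rw [variance_of_integral_eq_zero haemk hmean]
      show ∫ ω, (M k ^ (2:ℕ)) ω ∂P = 0
      simp only [Pi.pow_apply]
      rw [hsqeq, hvmap, gaussianReal_zero_var, integral_dirac]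
      norm_num
    linarith
  have hvarr : variance (M k) P = (v:ℝ) := by
    rw [variance_of_integral_eq_zero haemk hmean]
    show ∫ ω, (M k ^ (2:ℕ)) ω ∂P = (v:ℝ)
    simp only [Pi.pow_apply]
    rw [hsqeq, hvmap, gauss_sq_integral hvne]
  have hVpos : (0:ℝ) < (v:ℝ) := by rw [← hvarr]; exact hvar
  rw [hvarr]
  set t : ℝ := η / (v:ℝ) with ht
  have htpos : 0 < t := div_pos hη hVpos
  set ε : ℝ≥0 := Real.toNNReal (Real.exp (t * η)) with hε
  have hεcoe : (ε : ℝ) = Real.exp (t * η) := Real.coe_toNNReal _ (Real.exp_pos _).le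
  have hεne : (ε : ℝ≥0∞) ≠ 0 := by
    simp only [ne_eq, ENNReal.coe_eq_zero, hε, Real.toNNReal_eq_zero, not_le]
    exact Real.exp_pos _
  have hεtop : (ε : ℝ≥0∞) ≠ ⊤ := ENNReal.coe_ne_top
  have hbound : ∀ c : ℝ, c ^ 2 = t ^ 2 →
      P {ω | (ε:ℝ) ≤ (Finset.range (k+1)).sup' Finset.nonempty_range_add_one
          fun i ↦ Real.exp (c * M (min i k) ω)}
        ≤ ENNReal.ofReal (Real.exp (-η ^ 2 / (2 * (v:ℝ)))) := by
    intro c hc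
    set S := {ω | (ε:ℝ) ≤ (Finset.range (k+1)).sup' Finset.nonempty_range_add_one
        fun i ↦ Real.exp (c * M (min i k) ω)} with hS
    have hsubm := exp_submartingale hmart hgauss c
    have hmax := maximal_ineq hsubm (fun i ω ↦ (Real.exp_pos _).le) (ε := ε) k
    have hmax' : ε • P S ≤
        ENNReal.ofReal (∫ ω in S, Real.exp (c * M (min k k) ω) ∂P) := hmax
    have hgkint : Integrable (fun ω ↦ Real.exp (c * M (min k k) ω)) P :=
      hexpint hmart hgauss (min_le_right k k) c
    have hsetle : ∫ ω in S, Real.exp (c * M (min k k) ω) ∂P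
        ≤ ∫ ω, Real.exp (c * M (min k k) ω) ∂P :=
      setIntegral_le_integral hgkint
        (Filter.Eventually.of_forall fun ω ↦ (Real.exp_pos _).le)
    have hval : ∫ ω, Real.exp (c * M (min k k) ω) ∂P = Real.exp ((v:ℝ) * c ^ 2 / 2) := by
      simp only [min_self]
      have h1 : ∫ x, Real.exp (c * x) ∂(P.map (M k)) = ∫ ω, Real.exp (c * M k ω) ∂P :=
        integral_map haemk ((measurable_id.const_mul c).exp).aestronglyMeasurable
      rw [← h1, hvmap, gauss_exp_integral hvne]
    have h2 : (ε:ℝ≥0∞) * P S ≤ ENNReal.ofReal (Real.exp ((v:ℝ) * c ^ 2 / 2)) := by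
      calc (ε:ℝ≥0∞) * P S = ε • P S := by rw [ENNReal.smul_def, smul_eq_mul]
        _ ≤ ENNReal.ofReal (∫ ω in S, Real.exp (c * M (min k k) ω) ∂P) := hmax'
        _ ≤ ENNReal.ofReal (∫ ω, Real.exp (c * M (min k k) ω) ∂P) :=
            ENNReal.ofReal_le_ofReal hsetle
        _ = ENNReal.ofReal (Real.exp ((v:ℝ) * c ^ 2 / 2)) := by rw [hval]
    have h3 : P S ≤ ENNReal.ofReal (Real.exp ((v:ℝ) * c ^ 2 / 2)) / (ε:ℝ≥0∞) := by
      rw [ENNReal.le_div_iff_mul_le (Or.inl hεne) (Or.inl hεtop), mul_comm]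
      exact h2
    refine le_trans h3 (le_of_eq ?_)
    have hεofr : (ε:ℝ≥0∞) = ENNReal.ofReal (Real.exp (t * η)) := rfl
    rw [hεofr, ← ENNReal.ofReal_div_of_pos (Real.exp_pos _), ← Real.exp_sub]
    congr 1
    rw [hc, ht]
    field_simp
    ring
  have hsubset : {ω | ∃ i ≤ k, η < |M i ω|} ⊆
      {ω | (ε:ℝ) ≤ (Finset.range (k+1)).sup' Finset.nonempty_range_add_one
          fun i ↦ Real.exp (t * M (min i k) ω)}
      ∪ {ω | (ε:ℝ) ≤ (Finset.range (k+1)).sup' Finset.nonempty_range_add_one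
          fun i ↦ Real.exp ((-t) * M (min i k) ω)} := by
    rintro ω ⟨i, hik, habs⟩
    rw [lt_abs] at habs
    have himem : i ∈ Finset.range (k+1) := Finset.mem_range.mpr (Nat.lt_succ_of_le hik)
    have hmin : min i k = i := min_eq_left hik
    cases habs with
    | inl hpos =>
      left
      show (ε:ℝ) ≤ _
      refine le_trans ?_ (Finset.le_sup' (fun i ↦ Real.exp (t * M (min i k) ω)) himem)
      rw [hεcoe, hmin]
      exact Real.exp_le_exp.mpr (by nlinarith)
    | inr hneg =>
      right
      show (ε:ℝ) ≤ _
      refine le_trans ?_ (Finset.le_sup' (fun i ↦ Real.exp ((-t) * M (min i k) ω)) himem)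
      rw [hεcoe, hmin]
      exact Real.exp_le_exp.mpr (by nlinarith)
  calc P {ω | ∃ i ≤ k, η < |M i ω|}
      ≤ P ({ω | (ε:ℝ) ≤ (Finset.range (k+1)).sup' Finset.nonempty_range_add_one
          fun i ↦ Real.exp (t * M (min i k) ω)}
        ∪ {ω | (ε:ℝ) ≤ (Finset.range (k+1)).sup' Finset.nonempty_range_add_one
          fun i ↦ Real.exp ((-t) * M (min i k) ω)}) := measure_mono hsubset
    _ ≤ P {ω | (ε:ℝ) ≤ (Finset.range (k+1)).sup' Finset.nonempty_range_add_one
          fun i ↦ Real.exp (t * M (min i k) ω)}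
        + P {ω | (ε:ℝ) ≤ (Finset.range (k+1)).sup' Finset.nonempty_range_add_one
          fun i ↦ Real.exp ((-t) * M (min i k) ω)} := measure_union_le _ _
    _ ≤ ENNReal.ofReal (Real.exp (-η ^ 2 / (2 * (v:ℝ))))
        + ENNReal.ofReal (Real.exp (-η ^ 2 / (2 * (v:ℝ)))) :=
          add_le_add (hbound t rfl) (hbound (-t) (by ring))
    _ = ENNReal.ofReal (2 * Real.exp (-η ^ 2 / (2 * (v:ℝ)))) := by
        rw [← ENNReal.ofReal_add (Real.exp_pos _).le (Real.exp_pos _).le, ← two_mul]
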